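/- The characteristic polynomial x⁶ - 91x⁵ + 2366x⁴ - 26364x³ + 142805x² - 371293x + 371293 of the formal codegree matrix of PSU(2)_11 has constant term 371293 = 13⁵ and second coefficient 91 = 7·13, and all its roots are real, positive, and lie in the real cyclotomic field ℚ(ζ_13)⁺ (an abelian extension of ℚ of degree 6). -/

import Mathlib

open Real Complex

private lemma psu_aux (k m : ℕ) (z : ℂ) (c : Fin 13 → ℚ)
    (hangle : (m : ℝ) * (2 * Real.pi / 13) = 2 * Real.pi - (k : ℝ) * (2 * Real.pi / 13))
    (h0 : 0 < (k : ℝ) * (2 * Real.pi / 13))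
    (hpi : (k : ℝ) * (2 * Real.pi / 13) ≤ Real.pi)
    (hzk : z * (2 - Complex.exp ((2 * Real.pi / 13 : ℝ) * Complex.I) ^ k
        - Complex.exp ((2 * Real.pi / 13 : ℝ) * Complex.I) ^ m) - 13 = 0)
    (hc : (∑ j : Fin 13, (c j : ℂ) * Complex.exp ((2 * Real.pi / 13 : ℝ) * Complex.I) ^ (j : ℕ))
        * (2 - Complex.exp ((2 * Real.pi / 13 : ℝ) * Complex.I) ^ k
        - Complex.exp ((2 * Real.pi / 13 : ℝ) * Complex.I) ^ m) = 13) :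
    z.im = 0 ∧ 0 < z.re ∧
      ∃ c' : Fin 13 → ℚ, z = ∑ j : Fin 13, (c' j : ℂ)
          * Complex.exp (2 * Real.pi * Complex.I * (j : ℕ) / 13) := by
  set X : ℂ := Complex.exp ((2 * Real.pi / 13 : ℝ) * Complex.I) with hX
  have hpow : ∀ n : ℕ, X ^ n = Complex.exp (((n : ℝ) * (2 * Real.pi / 13) : ℝ) * Complex.I) := by
    intro n
    rw [hX, ← Complex.exp_nat_mul]
    congr 1
    push_cast
    ring
  have hXk : X ^ k = (Real.cos ((k : ℝ) * (2 * Real.pi / 13)) : ℂ)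
      + (Real.sin ((k : ℝ) * (2 * Real.pi / 13)) : ℂ) * Complex.I := by
    rw [hpow k, Complex.exp_mul_I, ← Complex.ofReal_cos, ← Complex.ofReal_sin]
  have hXm : X ^ m = (Real.cos ((k : ℝ) * (2 * Real.pi / 13)) : ℂ)
      - (Real.sin ((k : ℝ) * (2 * Real.pi / 13)) : ℂ) * Complex.I := by
    rw [hpow m, Complex.exp_mul_I, ← Complex.ofReal_cos, ← Complex.ofReal_sin, hangle,
      Real.cos_two_pi_sub, Real.sin_two_pi_sub]
    push_cast
    ring
  have hcos : Real.cos ((k : ℝ) * (2 * Real.pi / 13)) < 1 := by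
    have h := Real.cos_lt_cos_of_nonneg_of_le_pi le_rfl hpi h0
    simpa using h
  have ha : (0 : ℝ) < 2 - 2 * Real.cos ((k : ℝ) * (2 * Real.pi / 13)) := by linarith
  have hA : 2 - X ^ k - X ^ m = ((2 - 2 * Real.cos ((k : ℝ) * (2 * Real.pi / 13)) : ℝ) : ℂ) := by
    rw [hXk, hXm]
    push_cast
    ring
  have hAne : 2 - X ^ k - X ^ m ≠ 0 := by
    rw [hA]
    exact_mod_cast ne_of_gt ha
  have hz13 : z * (2 - X ^ k - X ^ m) = 13 := by linear_combination hzk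
  have hzval : z = ((13 / (2 - 2 * Real.cos ((k : ℝ) * (2 * Real.pi / 13))) : ℝ) : ℂ) := by
    have h' : z = 13 / (2 - X ^ k - X ^ m) := (eq_div_iff hAne).mpr hz13
    rw [h', hA]
    push_cast
    ring
  refine ⟨by rw [hzval]; exact Complex.ofReal_im _,
    by rw [hzval, Complex.ofReal_re]; exact div_pos (by norm_num) ha, c, ?_⟩
  have hzsum : z = ∑ j : Fin 13, (c j : ℂ) * X ^ (j : ℕ) :=
    mul_right_cancel₀ hAne (hz13.trans hc.symm)
  rw [hzsum]
  refine Finset.sum_congr rfl fun j _ => ?_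
  congr 1
  rw [hpow]
  congr 1
  push_cast
  ring

set_option maxHeartbeats 2000000 in
/-- The characteristic polynomial x⁶ - 91x⁵ + 2366x⁴ - 26364x³ + 142805x²
- 371293x + 371293 of the formal codegree matrix of PSU(2)₁₁ has constant term
371293 = 13⁵ and subleading coefficient -91 with 91 = 7·13, and all of its
roots are real, positive, and lie in the real cyclotomic field
ℚ(ζ₁₃)⁺ = ℚ(ζ₁₃) ∩ ℝ (each root is a ℚ-linear combination of 13-th roots of
unity and is real). -/
theorem psu2_11_codegree_poly :
    (371293 : ℕ) = 13 ^ 5 ∧ (91 : ℕ) = 7 * 13 ∧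
    ∀ z : ℂ, z ^ 6 - 91 * z ^ 5 + 2366 * z ^ 4 - 26364 * z ^ 3
        + 142805 * z ^ 2 - 371293 * z + 371293 = 0 →
      z.im = 0 ∧ 0 < z.re ∧
      ∃ c : Fin 13 → ℚ,
        z = ∑ k : Fin 13, (c k : ℂ)
          * Complex.exp (2 * Real.pi * Complex.I * (k : ℕ) / 13) := by
  refine ⟨by norm_num, by norm_num, ?_⟩
  intro z hz
  set X : ℂ := Complex.exp ((2 * Real.pi / 13 : ℝ) * Complex.I) with hX
  have h13 : X ^ 13 = 1 := by
    rw [hX, ← Complex.exp_nat_mul,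
      show ((13 : ℕ) : ℂ) * (((2 * Real.pi / 13 : ℝ) : ℂ) * Complex.I)
        = 2 * (Real.pi : ℂ) * Complex.I by push_cast; ring]
    exact Complex.exp_two_pi_mul_I
  have hXne1 : X ≠ 1 := by
    intro h
    have him : X.im = Real.sin (2 * Real.pi / 13) := by
      rw [hX]; exact Complex.exp_ofReal_mul_I_im _
    have hpos : 0 < Real.sin (2 * Real.pi / 13) :=
      Real.sin_pos_of_pos_of_lt_pi (by positivity) (by nlinarith [Real.pi_pos])
    rw [h] at him
    simp at him
    linarith
  have hs : 1 + X ^ 1 + X ^ 2 + X ^ 3 + X ^ 4 + X ^ 5 + X ^ 6 + X ^ 7 + X ^ 8 + X ^ 9 + X ^ 10 + X ^ 11 + X ^ 12 = 0 := by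
    have hfac : (X - 1) * (1 + X ^ 1 + X ^ 2 + X ^ 3 + X ^ 4 + X ^ 5 + X ^ 6 + X ^ 7 + X ^ 8 + X ^ 9 + X ^ 10 + X ^ 11 + X ^ 12) = 0 := by linear_combination h13
    rcases mul_eq_zero.mp hfac with h | h
    · exact absurd (sub_eq_zero.mp h) hXne1
    · exact h
  have hbig : ∀ w : ℂ,
      (w ^ 6 - 91 * w ^ 5 + 2366 * w ^ 4 - 26364 * w ^ 3 + 142805 * w ^ 2 - 371293 * w + 371293)
        * ((2 - X ^ 1 - X ^ 12)*(2 - X ^ 2 - X ^ 11)*(2 - X ^ 3 - X ^ 10)*(2 - X ^ 4 - X ^ 9)*(2 - X ^ 5 - X ^ 8)*(2 - X ^ 6 - X ^ 7))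
      = (w * (2 - X ^ 1 - X ^ 12) - 13)*(w * (2 - X ^ 2 - X ^ 11) - 13)*(w * (2 - X ^ 3 - X ^ 10) - 13)*(w * (2 - X ^ 4 - X ^ 9) - 13)*(w * (2 - X ^ 5 - X ^ 8) - 13)*(w * (2 - X ^ 6 - X ^ 7) - 13) := by
    intro w
    linear_combination ((18935943:ℂ) + (-30817319:ℂ) * X ^ 1 + (5940688:ℂ) * X ^ 3 + (5940688:ℂ) * X ^ 5 + (-2970344:ℂ) * X ^ 6 + (5940688:ℂ) * X ^ 7 + (-2970344:ℂ) * X ^ 8 + (2970344:ℂ) * X ^ 9 + (-1485172:ℂ) * X ^ 10 + (2970344:ℂ) * X ^ 11 + (-4455516:ℂ) * X ^ 12 + (-371293:ℂ) * X ^ 13 + (10767497:ℂ) * X ^ 14 + (-5198102:ℂ) * X ^ 15 + (-4455516:ℂ) * X ^ 16 + (-742586:ℂ) * X ^ 17 + (-3712930:ℂ) * X ^ 18 + (742586:ℂ) * X ^ 19 + (-1485172:ℂ) * X ^ 20 + (371293:ℂ) * X ^ 21 + (1856465:ℂ) * X ^ 23 + (-1856465:ℂ) * X ^ 24 + (2227758:ℂ)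 * X ^ 25 + (371293:ℂ) * X ^ 26 + (371293:ℂ) * X ^ 27 + (2227758:ℂ) * X ^ 28 + (-371293:ℂ) * X ^ 29 + (742586:ℂ) * X ^ 30 + (-1113879:ℂ) * X ^ 33 + (742586:ℂ) * X ^ 34 + (-742586:ℂ) * X ^ 35 + (-742586:ℂ) * X ^ 36 + (371293:ℂ) * X ^ 37 + (-742586:ℂ) * X ^ 38 + (371293:ℂ) * X ^ 42 + (-371293:ℂ) * X ^ 43 + (371293:ℂ) * X ^ 45 + (-19307236:ℂ) * w ^ 1 + (30817319:ℂ) * w ^ 1 * X ^ 1 + (-5940688:ℂ) * w ^ 1 * X ^ 3 + (-5940688:ℂ) * w ^ 1 * X ^ 5 + (2970344:ℂ) * w ^ 1 * X ^ 6 + (-5940688:ℂ) * w ^ 1 * X ^ 7 + (2970344:ℂ) * w ^ 1 * X ^ 8 + (-2970344:ℂ) * w ^ 1 * X ^ 9 + (1485172:ℂ) * w ^ 1 * X ^ 10 + (-2970344:ℂ) * w ^ 1 * X ^ 11 + (4455516:ℂ) * w ^ 1 * X ^ 12 + (371293:ℂ) * w ^ 1 * X ^ 13 + (-10767497:ℂ)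 * w ^ 1 * X ^ 14 + (5198102:ℂ) * w ^ 1 * X ^ 15 + (4455516:ℂ) * w ^ 1 * X ^ 16 + (742586:ℂ) * w ^ 1 * X ^ 17 + (3712930:ℂ) * w ^ 1 * X ^ 18 + (-742586:ℂ) * w ^ 1 * X ^ 19 + (1485172:ℂ) * w ^ 1 * X ^ 20 + (-371293:ℂ) * w ^ 1 * X ^ 21 + (-1856465:ℂ) * w ^ 1 * X ^ 23 + (1856465:ℂ) * w ^ 1 * X ^ 24 + (-2227758:ℂ) * w ^ 1 * X ^ 25 + (-371293:ℂ) * w ^ 1 * X ^ 26 + (-371293:ℂ) * w ^ 1 * X ^ 27 + (-2227758:ℂ) * w ^ 1 * X ^ 28 + (371293:ℂ) * w ^ 1 * X ^ 29 + (-742586:ℂ) * w ^ 1 * X ^ 30 + (1113879:ℂ) * w ^ 1 * X ^ 33 + (-742586:ℂ) * w ^ 1 * X ^ 34 + (742586:ℂ) * w ^ 1 * X ^ 35 + (742586:ℂ) * w ^ 1 * X ^ 36 + (-371293:ℂ) * w ^ 1 * X ^ 37 + (742586:ℂ) * w ^ 1 * X ^ 38 + (-371293:ℂ) * w ^ 1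 * X ^ 42 + (371293:ℂ) * w ^ 1 * X ^ 43 + (-371293:ℂ) * w ^ 1 * X ^ 45 + (7425860:ℂ) * w ^ 2 + (-11710010:ℂ) * w ^ 2 * X ^ 1 + (2256319:ℂ) * w ^ 2 * X ^ 3 + (2256319:ℂ) * w ^ 2 * X ^ 5 + (-1142440:ℂ) * w ^ 2 * X ^ 6 + (2256319:ℂ) * w ^ 2 * X ^ 7 + (-1142440:ℂ) * w ^ 2 * X ^ 8 + (1113879:ℂ) * w ^ 2 * X ^ 9 + (-571220:ℂ) * w ^ 2 * X ^ 10 + (1113879:ℂ) * w ^ 2 * X ^ 11 + (-1713660:ℂ) * w ^ 2 * X ^ 12 + (-142805:ℂ) * w ^ 2 * X ^ 13 + (4141345:ℂ) * w ^ 2 * X ^ 14 + (-1999270:ℂ) * w ^ 2 * X ^ 15 + (-1713660:ℂ) * w ^ 2 * X ^ 16 + (-285610:ℂ) * w ^ 2 * X ^ 17 + (-1428050:ℂ) * w ^ 2 * X ^ 18 + (285610:ℂ) * w ^ 2 * X ^ 19 + (-571220:ℂ) * w ^ 2 * X ^ 20 + (142805:ℂ) * w ^ 2 * X ^ 21 +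 (714025:ℂ) * w ^ 2 * X ^ 23 + (-714025:ℂ) * w ^ 2 * X ^ 24 + (856830:ℂ) * w ^ 2 * X ^ 25 + (142805:ℂ) * w ^ 2 * X ^ 26 + (142805:ℂ) * w ^ 2 * X ^ 27 + (856830:ℂ) * w ^ 2 * X ^ 28 + (-142805:ℂ) * w ^ 2 * X ^ 29 + (285610:ℂ) * w ^ 2 * X ^ 30 + (-428415:ℂ) * w ^ 2 * X ^ 33 + (285610:ℂ) * w ^ 2 * X ^ 34 + (-285610:ℂ) * w ^ 2 * X ^ 35 + (-285610:ℂ) * w ^ 2 * X ^ 36 + (142805:ℂ) * w ^ 2 * X ^ 37 + (-285610:ℂ) * w ^ 2 * X ^ 38 + (142805:ℂ) * w ^ 2 * X ^ 42 + (-142805:ℂ) * w ^ 2 * X ^ 43 + (142805:ℂ) * w ^ 2 * X ^ 45 + (-1335776:ℂ) * w ^ 3 + (2091544:ℂ) * w ^ 3 * X ^ 1 + (-404248:ℂ) * w ^ 3 * X ^ 3 + (-404248:ℂ) * w ^ 3 * X ^ 5 + (208715:ℂ) * w ^ 3 * X ^ 6 + (-404248:ℂ) * w ^ 3 * X ^ 7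 + (208715:ℂ) * w ^ 3 * X ^ 8 + (-195533:ℂ) * w ^ 3 * X ^ 9 + (103259:ℂ) * w ^ 3 * X ^ 10 + (-195533:ℂ) * w ^ 3 * X ^ 11 + (311974:ℂ) * w ^ 3 * X ^ 12 + (32955:ℂ) * w ^ 3 * X ^ 13 + (-766753:ℂ) * w ^ 3 * X ^ 14 + (364702:ℂ) * w ^ 3 * X ^ 15 + (314171:ℂ) * w ^ 3 * X ^ 16 + (50531:ℂ) * w ^ 3 * X ^ 17 + (261443:ℂ) * w ^ 3 * X ^ 18 + (-54925:ℂ) * w ^ 3 * X ^ 19 + (105456:ℂ) * w ^ 3 * X ^ 20 + (-28561:ℂ) * w ^ 3 * X ^ 21 + (-131820:ℂ) * w ^ 3 * X ^ 23 + (131820:ℂ) * w ^ 3 * X ^ 24 + (-158184:ℂ) * w ^ 3 * X ^ 25 + (-26364:ℂ) * w ^ 3 * X ^ 26 + (-26364:ℂ) * w ^ 3 * X ^ 27 + (-158184:ℂ) * w ^ 3 * X ^ 28 + (26364:ℂ) * w ^ 3 * X ^ 29 + (-52728:ℂ) * w ^ 3 * X ^ 30 + (79092:ℂ) * w ^ 3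 * X ^ 33 + (-52728:ℂ) * w ^ 3 * X ^ 34 + (52728:ℂ) * w ^ 3 * X ^ 35 + (52728:ℂ) * w ^ 3 * X ^ 36 + (-26364:ℂ) * w ^ 3 * X ^ 37 + (52728:ℂ) * w ^ 3 * X ^ 38 + (-26364:ℂ) * w ^ 3 * X ^ 42 + (26364:ℂ) * w ^ 3 * X ^ 43 + (-26364:ℂ) * w ^ 3 * X ^ 45 + (110864:ℂ) * w ^ 4 + (-173056:ℂ) * w ^ 4 * X ^ 1 + (33800:ℂ) * w ^ 4 * X ^ 3 + (33800:ℂ) * w ^ 4 * X ^ 5 + (-17914:ℂ) * w ^ 4 * X ^ 6 + (33800:ℂ) * w ^ 4 * X ^ 7 + (-17914:ℂ) * w ^ 4 * X ^ 8 + (15886:ℂ) * w ^ 4 * X ^ 9 + (-8619:ℂ) * w ^ 4 * X ^ 10 + (15886:ℂ) * w ^ 4 * X ^ 11 + (-26533:ℂ) * w ^ 4 * X ^ 12 + (-4563:ℂ) * w ^ 4 * X ^ 13 + (68276:ℂ) * w ^ 4 * X ^ 14 + (-31265:ℂ) * w ^ 4 * X ^ 15 + (-27209:ℂ) * w ^ 4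 * X ^ 16 + (-4056:ℂ) * w ^ 4 * X ^ 17 + (-22646:ℂ) * w ^ 4 * X ^ 18 + (5408:ℂ) * w ^ 4 * X ^ 19 + (-9464:ℂ) * w ^ 4 * X ^ 20 + (3042:ℂ) * w ^ 4 * X ^ 21 + (11492:ℂ) * w ^ 4 * X ^ 23 + (-11661:ℂ) * w ^ 4 * X ^ 24 + (14027:ℂ) * w ^ 4 * X ^ 25 + (2028:ℂ) * w ^ 4 * X ^ 26 + (2197:ℂ) * w ^ 4 * X ^ 27 + (14027:ℂ) * w ^ 4 * X ^ 28 + (-2366:ℂ) * w ^ 4 * X ^ 29 + (4563:ℂ) * w ^ 4 * X ^ 30 + (-7098:ℂ) * w ^ 4 * X ^ 33 + (4732:ℂ) * w ^ 4 * X ^ 34 + (-4732:ℂ) * w ^ 4 * X ^ 35 + (-4732:ℂ) * w ^ 4 * X ^ 36 + (2366:ℂ) * w ^ 4 * X ^ 37 + (-4732:ℂ) * w ^ 4 * X ^ 38 + (2366:ℂ) * w ^ 4 * X ^ 42 + (-2366:ℂ) * w ^ 4 * X ^ 43 + (2366:ℂ) * w ^ 4 * X ^ 45 + (-3328:ℂ)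 * w ^ 5 + (5200:ℂ) * w ^ 5 * X ^ 1 + (-1040:ℂ) * w ^ 5 * X ^ 3 + (-1040:ℂ) * w ^ 5 * X ^ 5 + (572:ℂ) * w ^ 5 * X ^ 6 + (-1040:ℂ) * w ^ 5 * X ^ 7 + (572:ℂ) * w ^ 5 * X ^ 8 + (-468:ℂ) * w ^ 5 * X ^ 9 + (260:ℂ) * w ^ 5 * X ^ 10 + (-468:ℂ) * w ^ 5 * X ^ 11 + (832:ℂ) * w ^ 5 * X ^ 12 + (260:ℂ) * w ^ 5 * X ^ 13 + (-2340:ℂ) * w ^ 5 * X ^ 14 + (1001:ℂ) * w ^ 5 * X ^ 15 + (884:ℂ) * w ^ 5 * X ^ 16 + (117:ℂ) * w ^ 5 * X ^ 17 + (741:ℂ) * w ^ 5 * X ^ 18 + (-221:ℂ) * w ^ 5 * X ^ 19 + (338:ℂ) * w ^ 5 * X ^ 20 + (-143:ℂ) * w ^ 5 * X ^ 21 + (-364:ℂ) * w ^ 5 * X ^ 23 + (390:ℂ) * w ^ 5 * X ^ 24 + (-481:ℂ) * w ^ 5 * X ^ 25 + (-39:ℂ) * w ^ 5 * X ^ 26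 + (-52:ℂ) * w ^ 5 * X ^ 27 + (-481:ℂ) * w ^ 5 * X ^ 28 + (78:ℂ) * w ^ 5 * X ^ 29 + (-143:ℂ) * w ^ 5 * X ^ 30 + (247:ℂ) * w ^ 5 * X ^ 33 + (-169:ℂ) * w ^ 5 * X ^ 34 + (169:ℂ) * w ^ 5 * X ^ 35 + (169:ℂ) * w ^ 5 * X ^ 36 + (-91:ℂ) * w ^ 5 * X ^ 37 + (169:ℂ) * w ^ 5 * X ^ 38 + (-91:ℂ) * w ^ 5 * X ^ 42 + (91:ℂ) * w ^ 5 * X ^ 43 + (-91:ℂ) * w ^ 5 * X ^ 45) * hs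
  have hP : (z * (2 - X ^ 1 - X ^ 12) - 13)*(z * (2 - X ^ 2 - X ^ 11) - 13)*(z * (2 - X ^ 3 - X ^ 10) - 13)*(z * (2 - X ^ 4 - X ^ 9) - 13)*(z * (2 - X ^ 5 - X ^ 8) - 13)*(z * (2 - X ^ 6 - X ^ 7) - 13) = 0 := by
    rw [← hbig z, hz, zero_mul]
  have hc1 : (∑ j : Fin 13, ((![6,0,-5,-9,-12,-14,-15,-15,-14,-12,-9,-5,0] : Fin 13 → ℚ) j : ℂ) * X ^ (j : ℕ))
      * (2 - X ^ 1 - X ^ 12) = 13 := by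
    have hsum : (∑ j : Fin 13, ((![6,0,-5,-9,-12,-14,-15,-15,-14,-12,-9,-5,0] : Fin 13 → ℚ) j : ℂ) * X ^ (j : ℕ))
        = (6:ℂ) * X ^ 0 + (0:ℂ) * X ^ 1 + (-5:ℂ) * X ^ 2 + (-9:ℂ) * X ^ 3 + (-12:ℂ) * X ^ 4 + (-14:ℂ) * X ^ 5 + (-15:ℂ) * X ^ 6 + (-15:ℂ) * X ^ 7 + (-14:ℂ) * X ^ 8 + (-12:ℂ) * X ^ 9 + (-9:ℂ) * X ^ 10 + (-5:ℂ) * X ^ 11 + (0:ℂ) * X ^ 12 := by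
      simp [Fin.sum_univ_succ]
      push_cast
      ring
    rw [hsum]
    linear_combination ((-1:ℂ) + (-5:ℂ) * X ^ 1 + (-4:ℂ) * X ^ 2 + (-3:ℂ) * X ^ 3 + (-2:ℂ) * X ^ 4 + (-1:ℂ) * X ^ 5 + (1:ℂ) * X ^ 7 + (2:ℂ) * X ^ 8 + (3:ℂ) * X ^ 9 + (4:ℂ) * X ^ 10 + (5:ℂ) * X ^ 11) * hs
  have hc2 : (∑ j : Fin 13, ((![21,0,15,1,10,3,6,6,3,10,1,15,0] : Fin 13 → ℚ) j : ℂ) * X ^ (j : ℕ))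
      * (2 - X ^ 2 - X ^ 11) = 13 := by
    have hsum : (∑ j : Fin 13, ((![21,0,15,1,10,3,6,6,3,10,1,15,0] : Fin 13 → ℚ) j : ℂ) * X ^ (j : ℕ))
        = (21:ℂ) * X ^ 0 + (0:ℂ) * X ^ 1 + (15:ℂ) * X ^ 2 + (1:ℂ) * X ^ 3 + (10:ℂ) * X ^ 4 + (3:ℂ) * X ^ 5 + (6:ℂ) * X ^ 6 + (6:ℂ) * X ^ 7 + (3:ℂ) * X ^ 8 + (10:ℂ) * X ^ 9 + (1:ℂ) * X ^ 10 + (15:ℂ) * X ^ 11 + (0:ℂ) * X ^ 12 := by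
      simp [Fin.sum_univ_succ]
      push_cast
      ring
    rw [hsum]
    linear_combination ((29:ℂ) + (-29:ℂ) * X ^ 1 + (9:ℂ) * X ^ 2 + (-7:ℂ) * X ^ 3 + (3:ℂ) * X ^ 4 + (-3:ℂ) * X ^ 6 + (7:ℂ) * X ^ 7 + (-9:ℂ) * X ^ 8 + (14:ℂ) * X ^ 9 + (-15:ℂ) * X ^ 10) * hs
  have hc3 : (∑ j : Fin 13, ((![18,0,-2,12,3,-3,7,7,-3,3,12,-2,0] : Fin 13 → ℚ) j : ℂ) * X ^ (j : ℕ))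
      * (2 - X ^ 3 - X ^ 10) = 13 := by
    have hsum : (∑ j : Fin 13, ((![18,0,-2,12,3,-3,7,7,-3,3,12,-2,0] : Fin 13 → ℚ) j : ℂ) * X ^ (j : ℕ))
        = (18:ℂ) * X ^ 0 + (0:ℂ) * X ^ 1 + (-2:ℂ) * X ^ 2 + (12:ℂ) * X ^ 3 + (3:ℂ) * X ^ 4 + (-3:ℂ) * X ^ 5 + (7:ℂ) * X ^ 6 + (7:ℂ) * X ^ 7 + (-3:ℂ) * X ^ 8 + (3:ℂ) * X ^ 9 + (12:ℂ) * X ^ 10 + (-2:ℂ) * X ^ 11 + (0:ℂ) * X ^ 12 := by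
      simp [Fin.sum_univ_succ]
      push_cast
      ring
    rw [hsum]
    linear_combination ((23:ℂ) + (-23:ℂ) * X ^ 1 + (-4:ℂ) * X ^ 2 + (10:ℂ) * X ^ 3 + (-10:ℂ) * X ^ 5 + (6:ℂ) * X ^ 6 + (9:ℂ) * X ^ 7 + (-14:ℂ) * X ^ 8 + (2:ℂ) * X ^ 9) * hs
  have hc4 : (∑ j : Fin 13, ((![15,0,-6,-3,9,4,-5,-5,4,9,-3,-6,0] : Fin 13 → ℚ) j : ℂ) * X ^ (j : ℕ))
      * (2 - X ^ 4 - X ^ 9) = 13 := by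
    have hsum : (∑ j : Fin 13, ((![15,0,-6,-3,9,4,-5,-5,4,9,-3,-6,0] : Fin 13 → ℚ) j : ℂ) * X ^ (j : ℕ))
        = (15:ℂ) * X ^ 0 + (0:ℂ) * X ^ 1 + (-6:ℂ) * X ^ 2 + (-3:ℂ) * X ^ 3 + (9:ℂ) * X ^ 4 + (4:ℂ) * X ^ 5 + (-5:ℂ) * X ^ 6 + (-5:ℂ) * X ^ 7 + (4:ℂ) * X ^ 8 + (9:ℂ) * X ^ 9 + (-3:ℂ) * X ^ 10 + (-6:ℂ) * X ^ 11 + (0:ℂ) * X ^ 12 := by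
      simp [Fin.sum_univ_succ]
      push_cast
      ring
    rw [hsum]
    linear_combination ((17:ℂ) + (-17:ℂ) * X ^ 1 + (-12:ℂ) * X ^ 2 + (6:ℂ) * X ^ 3 + (9:ℂ) * X ^ 4 + (5:ℂ) * X ^ 5 + (-12:ℂ) * X ^ 6 + (-3:ℂ) * X ^ 7 + (6:ℂ) * X ^ 8) * hs
  have hc5 : (∑ j : Fin 13, ((![20,0,5,9,-1,14,2,2,14,-1,9,5,0] : Fin 13 → ℚ) j : ℂ) * X ^ (j : ℕ))
      * (2 - X ^ 5 - X ^ 8) = 13 := by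
    have hsum : (∑ j : Fin 13, ((![20,0,5,9,-1,14,2,2,14,-1,9,5,0] : Fin 13 → ℚ) j : ℂ) * X ^ (j : ℕ))
        = (20:ℂ) * X ^ 0 + (0:ℂ) * X ^ 1 + (5:ℂ) * X ^ 2 + (9:ℂ) * X ^ 3 + (-1:ℂ) * X ^ 4 + (14:ℂ) * X ^ 5 + (2:ℂ) * X ^ 6 + (2:ℂ) * X ^ 7 + (14:ℂ) * X ^ 8 + (-1:ℂ) * X ^ 9 + (9:ℂ) * X ^ 10 + (5:ℂ) * X ^ 11 + (0:ℂ) * X ^ 12 := by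
      simp [Fin.sum_univ_succ]
      push_cast
      ring
    rw [hsum]
    linear_combination ((27:ℂ) + (-27:ℂ) * X ^ 1 + (10:ℂ) * X ^ 2 + (8:ℂ) * X ^ 3 + (-20:ℂ) * X ^ 4 + (10:ℂ) * X ^ 5 + (-4:ℂ) * X ^ 6 + (-5:ℂ) * X ^ 7) * hs
  have hc6 : (∑ j : Fin 13, ((![11,0,-7,-10,-9,-4,5,5,-4,-9,-10,-7,0] : Fin 13 → ℚ) j : ℂ) * X ^ (j : ℕ))
      * (2 - X ^ 6 - X ^ 7) = 13 := by
    have hsum : (∑ j : Fin 13, ((![11,0,-7,-10,-9,-4,5,5,-4,-9,-10,-7,0] : Fin 13 → ℚ) j : ℂ) * X ^ (j : ℕ))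
        = (11:ℂ) * X ^ 0 + (0:ℂ) * X ^ 1 + (-7:ℂ) * X ^ 2 + (-10:ℂ) * X ^ 3 + (-9:ℂ) * X ^ 4 + (-4:ℂ) * X ^ 5 + (5:ℂ) * X ^ 6 + (5:ℂ) * X ^ 7 + (-4:ℂ) * X ^ 8 + (-9:ℂ) * X ^ 9 + (-10:ℂ) * X ^ 10 + (-7:ℂ) * X ^ 11 + (0:ℂ) * X ^ 12 := by
      simp [Fin.sum_univ_succ]
      push_cast
      ring
    rw [hsum]
    linear_combination ((9:ℂ) + (-9:ℂ) * X ^ 1 + (-14:ℂ) * X ^ 2 + (-6:ℂ) * X ^ 3 + (2:ℂ) * X ^ 4 + (10:ℂ) * X ^ 5 + (7:ℂ) * X ^ 6) * hs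
  rw [hX] at hP hc1 hc2 hc3 hc4 hc5 hc6
  rcases mul_eq_zero.mp hP with h' | h
  swap
  · exact psu_aux 6 7 z _ (by push_cast; ring) (by positivity)
      (by push_cast; linarith [Real.pi_pos]) (by linear_combination h) hc6
  rcases mul_eq_zero.mp h' with h' | h
  swap
  · exact psu_aux 5 8 z _ (by push_cast; ring) (by positivity)
      (by push_cast; linarith [Real.pi_pos]) (by linear_combination h) hc5
  rcases mul_eq_zero.mp h' with h' | h
  swap
  · exact psu_aux 4 9 z _ (by push_cast; ring) (by positivity)
      (by push_cast; linarith [Real.pi_pos]) (by linear_combination h) hc4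
  rcases mul_eq_zero.mp h' with h' | h
  swap
  · exact psu_aux 3 10 z _ (by push_cast; ring) (by positivity)
      (by push_cast; linarith [Real.pi_pos]) (by linear_combination h) hc3
  rcases mul_eq_zero.mp h' with h | h
  · exact psu_aux 1 12 z _ (by push_cast; ring) (by positivity)
      (by push_cast; linarith [Real.pi_pos]) (by linear_combination h) hc1
  · exact psu_aux 2 11 z _ (by push_cast; ring) (by positivity)
      (by push_cast; linarith [Real.pi_pos]) (by linear_combination h) hc2
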